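/- Let G be a finite group with a normal subgroup S such that S is a nonabelian simple group and the centralizer of S in G is trivial. Let n ≥ 1, let M = {f ∈ G^n : f(j) ∈ S for all j} ≤ G^n, and let H be a subgroup of G^n with M ≤ H. Let K be a normal subgroup of H, and for each j let π_j : G^n → G denote projection to the j-th coordinate. Then K ∩ M = ∏_{j : π_j(K) ≠ 1} S_j; that is, an element f of M lies in K if and only if f(j) = 1 for every index j with π_j(K) trivial. -/

import Mathlib

/-- Lemma 3, from Abért: Let `G` be finite with `S ⊴ G` nonabelian simple
and `C_G(S) = 1`. Let `M = S × ... × S ≤ H ≤ G^n` and let `K` be a normal subgroup of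
`H`. Then `K ∩ M = ∏_{π_j(K) ≠ 1} S_j`: an element `f` of `M` lies in `K` iff `f j = 1`
for every coordinate `j` with `π_j(K)` trivial. -/
theorem normal_subgroup_inter_socle_power (G : Type) [Group G] [Fintype G]
    (S : Subgroup G) [hN : S.Normal]
    (hsimple : IsSimpleGroup S)
    (hnonab : ∃ x y : S, x * y ≠ y * x)
    (hcent : Subgroup.centralizer (S : Set G) = ⊥)
    (n : ℕ) (hn : 1 ≤ n)
    (H K : Subgroup (Fin n → G))
    (hMH : Subgroup.pi Set.univ (fun _ => S) ≤ H)
    (hKH : K ≤ H)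
    (hKnorm : ∀ h ∈ H, ∀ x ∈ K, h * x * h⁻¹ ∈ K)
    (f : Fin n → G) (hf : ∀ j, f j ∈ S) :
    f ∈ K ↔ ∀ j : Fin n,
      Subgroup.map (Pi.evalMonoidHom (fun _ : Fin n => G) j) K = ⊥ → f j = 1 := by
  constructor
  · intro hfK j hj
    have hm : f j ∈ Subgroup.map (Pi.evalMonoidHom (fun _ : Fin n => G) j) K :=
      ⟨f, hfK, rfl⟩
    rw [hj] at hm
    exact hm
  · intro hcond
    -- membership of single-coordinate S elements in H
    have hμS : ∀ (j : Fin n) (t : G), t ∈ S → Pi.mulSingle j t ∈ H := by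
      intro j t ht
      apply hMH
      rw [Subgroup.mem_pi]
      intro i _
      by_cases h : i = j
      · subst h; simpa using ht
      · rw [Pi.mulSingle_eq_of_ne h]; exact S.one_mem
    have key : ∀ j : Fin n,
        Subgroup.map (Pi.evalMonoidHom (fun _ : Fin n => G) j) K ≠ ⊥ →
        ∀ s ∈ S, Pi.mulSingle j s ∈ K := by
      intro j hj
      -- the subgroup of S of elements whose single at j lies in K
      let L : Subgroup S :=
        { carrier := {x : S | Pi.mulSingle j (x : G) ∈ K}
          one_mem' := by simpa using K.one_mem
          mul_mem' := fun {a b} ha hb => by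
            have := K.mul_mem ha hb
            simpa [← Pi.mulSingle_mul] using this
          inv_mem' := fun {a} ha => by
            have := K.inv_mem ha
            simpa [← Pi.mulSingle_inv] using this }
      have hLnorm : L.Normal := by
        constructor
        intro x hx t
        show Pi.mulSingle j ((t * x * t⁻¹ : S) : G) ∈ K
        have h1 : Pi.mulSingle j ((t : G)) ∈ H := hμS j _ t.2
        have h2 := hKnorm _ h1 _ hx
        have hc : ((t * x * t⁻¹ : S) : G) = (t : G) * (x : G) * (t : G)⁻¹ := by
          push_cast; rfl
        rw [hc, Pi.mulSingle_mul, Pi.mulSingle_mul, Pi.mulSingle_inv]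
        exact h2
      -- L is nontrivial
      have hLne : L ≠ ⊥ := by
        rw [Ne, Subgroup.eq_bot_iff_forall] at hj
        push_neg at hj
        obtain ⟨g, hgmem, hgne⟩ := hj
        obtain ⟨k, hkK, hkj⟩ := hgmem
        -- g = k j
        have hgkj : g = k j := hkj.symm
        -- find s ∈ S not commuting with g
        have hex : ∃ s ∈ S, s * g * s⁻¹ * g⁻¹ ≠ 1 := by
          by_contra hc
          push_neg at hc
          have : g ∈ Subgroup.centralizer (S : Set G) := by
            rw [Subgroup.mem_centralizer_iff]
            intro h hh
            have h1 := hc h hh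
            calc h * g = (h * g * h⁻¹ * g⁻¹) * (g * h) := by group
              _ = 1 * (g * h) := by rw [h1]
              _ = g * h := one_mul _
          rw [hcent] at this
          exact hgne this
        obtain ⟨s, hsS, hsne⟩ := hex
        have hxS : s * g * s⁻¹ * g⁻¹ ∈ S := by
          have : g * s⁻¹ * g⁻¹ ∈ S := by
            have := hN.conj_mem s⁻¹ (S.inv_mem hsS) g
            simpa [mul_assoc] using this
          have := S.mul_mem hsS this
          simpa [mul_assoc] using this
        have hxL : (⟨s * g * s⁻¹ * g⁻¹, hxS⟩ : S) ∈ L := by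
          show Pi.mulSingle j (s * g * s⁻¹ * g⁻¹) ∈ K
          have hmem : Pi.mulSingle j s * k * (Pi.mulSingle j s)⁻¹ * k⁻¹ ∈ K :=
            K.mul_mem (hKnorm _ (hμS j s hsS) _ hkK) (K.inv_mem hkK)
          have heq : Pi.mulSingle j s * k * (Pi.mulSingle j s)⁻¹ * k⁻¹
              = Pi.mulSingle j (s * k j * s⁻¹ * (k j)⁻¹) := by
            funext i
            by_cases h : i = j
            · subst h; simp
            · simp [Pi.mulSingle_eq_of_ne h]
          rw [heq, ← hgkj] at hmem
          exact hmem
        intro hbot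
        rw [hbot] at hxL
        rw [Subgroup.mem_bot] at hxL
        apply hsne
        simpa using Subtype.ext_iff.mp hxL
      have hLtop : L = ⊤ := (hsimple.eq_bot_or_eq_top_of_normal L hLnorm).resolve_left hLne
      intro s hs
      have : (⟨s, hs⟩ : S) ∈ L := hLtop ▸ Subgroup.mem_top _
      exact this
    rw [← Finset.noncommProd_mulSingle f]
    apply Subgroup.noncommProd_mem
    intro j _
    by_cases hj : Subgroup.map (Pi.evalMonoidHom (fun _ : Fin n => G) j) K = ⊥
    · rw [hcond j hj]
      simpa using K.one_mem
    · exact key j hj (f j) (hf j)
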